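/- Step-payoff fusion deviation is strictly profitable: let μ be a Borel probability measure on [0,1], t ∈ (0,1), p > 0, and define the payoff function V(x) = p if x ≥ t and V(x) = 0 if x < t. Suppose μ([0,t)) > 0 and μ([t,1]) > 0 (with barycenter of μ on [t,1] strictly greater than t, i.e., μ((t,1]) > 0). Then there exists a mean-preserving contraction ν of μ with ∫ V dν > ∫ V dμ. -/

import Mathlib

open MeasureTheory

/-- `ν` is a mean-preserving contraction of `μ`. -/
def IsMPC (μ ν : Measure ℝ) : Prop :=
  ∀ φ : ℝ → ℝ, ConvexOn ℝ (Set.Icc (0 : ℝ) 1) φ → Continuous φ →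
    ∫ x, φ x ∂ν ≤ ∫ x, φ x ∂μ

/-- Step-payoff fusion deviation is strictly profitable: for the step payoff
`V x = p·1{x ≥ t}` and a prior `μ` with mass both strictly below and strictly above
the threshold `t`, some mean-preserving contraction of `μ` yields a strictly
higher expected payoff. -/
theorem fusion_deviation_profitable
    (μ : Measure ℝ) [IsProbabilityMeasure μ]
    (hsupp : μ (Set.Icc 0 1) = 1)
    (t p : ℝ) (ht : t ∈ Set.Ioo (0 : ℝ) 1) (hp : 0 < p)
    (hbelow : 0 < μ (Set.Ico 0 t)) (habove : 0 < μ (Set.Ioc t 1))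
    (V : ℝ → ℝ) (hV : ∀ x, V x = if t ≤ x then p else 0) :
    ∃ ν : Measure ℝ, IsProbabilityMeasure ν ∧ IsMPC μ ν ∧
      ∫ x, V x ∂μ < ∫ x, V x ∂ν := by
  obtain ⟨h0t, ht1⟩ := ht
  set a : Set ℝ := Set.Icc t 1 with ha
  set b : Set ℝ := Set.Ico 0 t with hb
  have hma : MeasurableSet a := measurableSet_Icc
  have hmb : MeasurableSet b := measurableSet_Ico
  -- μ-a.e. membership in [0,1]
  have haemem : ∀ᵐ x ∂μ, x ∈ Set.Icc (0:ℝ) 1 := by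
    have : μ (Set.Icc (0:ℝ) 1)ᶜ = 0 := by
      rw [measure_compl measurableSet_Icc (measure_ne_top μ _), hsupp, measure_univ, tsub_self]
    exact ae_iff.2 this
  have hdisj : Disjoint b a := by
    rw [Set.disjoint_left]; intro x hx hx'; exact absurd hx'.1 (not_le.2 hx.2)
  have hsplit : μ.restrict b + μ.restrict a = μ := by
    rw [← Measure.restrict_union hdisj hma, Set.Ico_union_Icc_eq_Icc h0t.le ht1.le,
      Measure.restrict_eq_self_of_ae_mem haemem]
  -- integrability of continuous functions on a and b
  have hIa : ∀ f : ℝ → ℝ, Continuous f → IntegrableOn f a μ := fun f hf =>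
    (hf.integrableOn_Icc).mono_set (Set.Icc_subset_Icc h0t.le le_rfl)
  have hIb : ∀ f : ℝ → ℝ, Continuous f → IntegrableOn f b μ := fun f hf =>
    (hf.integrableOn_Icc).mono_set (fun x hx => ⟨hx.1, hx.2.le.trans ht1.le⟩)
  -- the excess mean above t
  set Δ : ℝ := ∫ x in a, (x - t) ∂μ with hΔ
  have hΔint : IntegrableOn (fun x => x - t) a μ := hIa _ (by continuity)
  have hΔnonneg : 0 ≤ᵐ[μ.restrict a] fun x => x - t :=
    (ae_restrict_iff' hma).2 (ae_of_all _ fun x hx => sub_nonneg.2 hx.1)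
  have hΔpos : 0 < Δ := by
    have hsub : Set.Ioc t 1 ⊆ a := Set.Ioc_subset_Icc_self
    have h1 : ∫ x in Set.Ioc t 1, (x - t) ∂μ ≤ Δ :=
      setIntegral_mono_set hΔint hΔnonneg (HasSubset.Subset.eventuallyLE hsub)
    have h2 : 0 < ∫ x in Set.Ioc t 1, (x - t) ∂μ := by
      rw [setIntegral_pos_iff_support_of_nonneg_ae
        ((ae_restrict_iff' measurableSet_Ioc).2 (ae_of_all _ fun x hx => sub_nonneg.2 hx.1.le))
        (hΔint.mono_set hsub)]
      have : Function.support (fun x : ℝ => x - t) ∩ Set.Ioc t 1 = Set.Ioc t 1 :=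
        Set.inter_eq_self_of_subset_right (fun x hx => sub_ne_zero.2 (ne_of_gt hx.1))
      rw [this]; exact habove
    linarith
  -- choice of the fused fraction
  set ε : ℝ := min 1 (Δ / t) with hε
  have hε0 : 0 < ε := lt_min one_pos (div_pos hΔpos h0t)
  have hε1 : ε ≤ 1 := min_le_left _ _
  have hεt : ε * t ≤ Δ := by
    have := min_le_right 1 (Δ / t)
    calc ε * t ≤ (Δ / t) * t := by nlinarith
    _ = Δ := div_mul_cancel₀ _ (ne_of_gt h0t)
  -- the fused measure
  set κ : Measure ℝ := μ.restrict a + ENNReal.ofReal ε • μ.restrict b with hκ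
  have hκa : ∀ f : ℝ → ℝ, Continuous f → Integrable f κ := fun f hf =>
    Integrable.add_measure (hIa f hf) (((hIb f hf)).smul_measure ENNReal.ofReal_ne_top)
  have hκint : ∀ f : ℝ → ℝ, Continuous f →
      ∫ x, f x ∂κ = (∫ x in a, f x ∂μ) + ε * ∫ x in b, f x ∂μ := by
    intro f hf
    rw [hκ, integral_add_measure (hIa f hf) ((hIb f hf).smul_measure ENNReal.ofReal_ne_top),
      integral_smul_measure, ENNReal.toReal_ofReal hε0.le, smul_eq_mul]
  have hκuniv : κ Set.univ = μ a + ENNReal.ofReal ε * μ b := by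
    simp [hκ, Measure.restrict_apply_univ]
  haveI hκfin : IsFiniteMeasure κ := ⟨by
    rw [hκuniv]
    exact ENNReal.add_lt_top.2 ⟨(measure_lt_top μ a),
      ENNReal.mul_lt_top ENNReal.ofReal_lt_top (measure_lt_top μ b)⟩⟩
  set A : ℝ := (μ a).toReal with hA
  set B : ℝ := (μ b).toReal with hB
  have hBpos : 0 < B := ENNReal.toReal_pos (ne_of_gt hbelow) (measure_ne_top μ b)
  have hApos : 0 < A := ENNReal.toReal_pos
    (ne_of_gt (lt_of_lt_of_le habove (measure_mono Set.Ioc_subset_Icc_self)))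
    (measure_ne_top μ a)
  set c : ℝ := (κ Set.univ).toReal with hc
  have hcval : c = A + ε * B := by
    rw [hc, hκuniv, ENNReal.toReal_add (measure_ne_top μ a)
      (ENNReal.mul_ne_top ENNReal.ofReal_ne_top (measure_ne_top μ b)),
      ENNReal.toReal_mul, ENNReal.toReal_ofReal hε0.le]
  have hcpos : 0 < c := by rw [hcval]; positivity
  have hκne : κ ≠ 0 := by
    intro h
    have h2 : κ Set.univ = 0 := by rw [h]; simp
    rw [hκuniv] at h2
    exact absurd (add_eq_zero.mp h2).1
      (lt_of_lt_of_le habove (measure_mono Set.Ioc_subset_Icc_self)).ne'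
  haveI : NeZero κ := ⟨hκne⟩
  -- the barycenter
  set m : ℝ := ⨍ x, x ∂κ with hm
  have hcm : c * m = (∫ x in a, x ∂μ) + ε * ∫ x in b, x ∂μ := by
    rw [hm, average_eq, smul_eq_mul, ← mul_assoc, show κ.real Set.univ = c from rfl, mul_inv_cancel₀ (ne_of_gt hcpos),
      one_mul, hκint _ continuous_id']
  have hxa : ∫ x in a, x ∂μ = Δ + t * A := by
    have h1 : ∫ x in a, (t:ℝ) ∂μ = t * A := by rw [setIntegral_const, smul_eq_mul, mul_comm]; rfl
    have h2 : Δ = (∫ x in a, x ∂μ) - ∫ x in a, (t:ℝ) ∂μ := by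
      rw [hΔ, integral_sub (hIa _ continuous_id') (integrableOn_const (measure_lt_top μ a).ne)]
    rw [h1] at h2
    linarith
  have hxb : 0 ≤ ∫ x in b, x ∂μ := setIntegral_nonneg hmb fun x hx => hx.1
  have hB1 : B ≤ 1 := by
    rw [hB]
    exact ENNReal.toReal_le_of_le_ofReal one_pos.le (by simpa using prob_le_one)
  have hmt : t ≤ m := by
    have h1 : t * c ≤ c * m := by
      rw [hcm, hxa, hcval]
      nlinarith
    nlinarith
  -- the deviation measure
  refine ⟨κ Set.univ • Measure.dirac m + ENNReal.ofReal (1 - ε) • μ.restrict b, ?_, ?_, ?_⟩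
  · constructor
    have : (ENNReal.ofReal ε + ENNReal.ofReal (1 - ε)) = 1 := by
      rw [← ENNReal.ofReal_add hε0.le (by linarith), add_sub_cancel, ENNReal.ofReal_one]
    have htot : μ b + μ a = 1 := by
      have := congrArg (fun ξ : Measure ℝ => ξ Set.univ) hsplit
      simpa [Measure.restrict_apply_univ] using this
    simp only [Measure.add_apply, Measure.smul_apply, smul_eq_mul, measure_univ, mul_one,
      Measure.restrict_apply_univ, hκuniv]
    calc μ a + ENNReal.ofReal ε * μ b + ENNReal.ofReal (1 - ε) * μ b
        = μ a + (ENNReal.ofReal ε + ENNReal.ofReal (1 - ε)) * μ b := by ring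
      _ = μ a + μ b := by rw [this, one_mul]
      _ = 1 := by rw [add_comm]; exact htot
  · intro φ hφconv hφcont
    have hφb : Integrable φ ((ENNReal.ofReal (1 - ε)) • μ.restrict b) :=
      (hIb φ hφcont).smul_measure ENNReal.ofReal_ne_top
    have hφd : Integrable φ ((κ Set.univ) • Measure.dirac m) := by
      refine Integrable.smul_measure ?_ (measure_ne_top κ _)
      exact (integrable_const (φ m)).congr (MeasureTheory.ae_eq_dirac φ).symm
    rw [integral_add_measure hφd hφb, integral_smul_measure, integral_smul_measure,
      integral_dirac, ENNReal.toReal_ofReal (by linarith : (0:ℝ) ≤ 1 - ε)]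
    -- Jensen
    have haeκ : ∀ᵐ x ∂κ, x ∈ Set.Icc (0:ℝ) 1 := by
      rw [hκ, ae_add_measure_iff]
      constructor
      · exact (ae_restrict_mem hma).mono fun x hx => ⟨h0t.le.trans hx.1, hx.2⟩
      · exact Measure.ae_smul_measure
          ((ae_restrict_mem hmb).mono fun x hx => ⟨hx.1, hx.2.le.trans ht1.le⟩) _
    have hjen : φ m ≤ ⨍ x, φ x ∂κ := by
      have := hφconv.map_average_le hφcont.continuousOn isClosed_Icc haeκ
        (hκa _ continuous_id') (by
          show Integrable (φ ∘ id) κ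
          simpa [Function.comp] using hκa φ hφcont)
      simpa using this
    have hjen' : c * φ m ≤ ∫ x, φ x ∂κ := by
      have := mul_le_mul_of_nonneg_left hjen hcpos.le
      rwa [average_eq, smul_eq_mul, ← mul_assoc, show κ.real Set.univ = c from rfl, mul_inv_cancel₀ (ne_of_gt hcpos),
        one_mul] at this
    rw [hκint φ hφcont] at hjen'
    have hsplitint : ∫ x, φ x ∂μ = (∫ x in b, φ x ∂μ) + ∫ x in a, φ x ∂μ := by
      have h := integral_add_measure (hIb φ hφcont) (hIa φ hφcont)
      rw [hsplit] at h
      exact h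
    rw [hsplitint]
    simp only [smul_eq_mul, ← hc]
    have hx : (1 - ε) * ∫ x in b, φ x ∂μ
        = ∫ x in b, φ x ∂μ - ε * ∫ x in b, φ x ∂μ := by ring
    linarith [hjen']
  · -- the payoff comparison
    have hVind : V = Set.indicator (Set.Ici t) (fun _ => p) := by
      funext x; rw [hV]; simp [Set.indicator_apply, Set.mem_Ici]
    have hVint : ∀ (ξ : Measure ℝ) [IsFiniteMeasure ξ], Integrable V ξ := by
      intro ξ _; rw [hVind]
      exact (integrable_const p).indicator measurableSet_Ici
    have hVb : ∫ x in b, V x ∂μ = 0 := by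
      rw [setIntegral_congr_fun hmb (fun x hx => by rw [hV, if_neg (not_le.2 hx.2)])]
      exact integral_zero _ _
    have hVa : ∫ x in a, V x ∂μ = p * A := by
      rw [setIntegral_congr_fun hma (fun x hx => by rw [hV, if_pos hx.1] : Set.EqOn V (fun _ => p) a),
        setIntegral_const, smul_eq_mul, mul_comm]; rfl
    have hμV : ∫ x, V x ∂μ = p * A := by
      have h := integral_add_measure ((hVint μ).restrict (s := b)) ((hVint μ).restrict (s := a))
      rw [hsplit] at h
      rw [h, hVb, hVa, zero_add]
    have hνV : ∫ x, V x ∂(κ Set.univ • Measure.dirac m + ENNReal.ofReal (1 - ε) • μ.restrict b)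
        = c * p + (1 - ε) * ∫ x in b, V x ∂μ := by
      rw [integral_add_measure
        (((hVint (Measure.dirac m))).smul_measure (measure_ne_top κ _))
        (((hVint μ).restrict).smul_measure ENNReal.ofReal_ne_top),
        integral_smul_measure, integral_smul_measure, integral_dirac,
        ENNReal.toReal_ofReal (by linarith : (0:ℝ) ≤ 1 - ε), hV, if_pos hmt, smul_eq_mul,
        smul_eq_mul]
    rw [hμV, hνV, hVb, mul_zero, add_zero, hcval]
    nlinarith [mul_pos (mul_pos hε0 hBpos) hp]
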